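/- Let φ° be a norm on ℝ² that is twice continuously differentiable on ℝ² ∖ {0}, and let σ, β ∈ C²([0,1]; ℝ²) with σ'(x) ≠ 0 for every x ∈ [0,1]. Set ν(x) = σ'(x)^⊥/|σ'(x)|, N(x) = ∇φ°(σ'(x)^⊥) and κ^φ(x) = N'(x)·σ'(x)/|σ'(x)|². Then the function ℓ(s) = ∫₀¹ φ°((σ'(x) + s β'(x))^⊥) dx (defined for |s| small enough that σ' + sβ' never vanishes) is differentiable at s = 0 and ℓ'(0) = ∫₀¹ (β(x)·ν(x)) κ^φ(x) |σ'(x)| dx + β(0)·N(0)^⊥ − β(1)·N(1)^⊥. -/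

import Mathlib

noncomputable section
open Set

abbrev E2 : Type := EuclideanSpace ℝ (Fin 2)

/-- counterclockwise 90°-rotation of a vector in the plane -/
def perp (a : E2) : E2 := !₂[-(a 1), a 0]

local notation "⟪" x ", " y "⟫" => @inner ℝ _ _ x y


lemma perp_apply0 (a : E2) : perp a 0 = -(a 1) := by simp [perp]
lemma perp_apply1 (a : E2) : perp a 1 = a 0 := by simp [perp]

lemma perp_add (a b : E2) : perp (a + b) = perp a + perp b := by
  ext i; fin_cases i <;> simp [perp, PiLp.add_apply] <;> ring

lemma perp_smul (c : ℝ) (a : E2) : perp (c • a) = c • perp a := by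
  ext i; fin_cases i <;> simp [perp, PiLp.smul_apply] <;> ring

def perpL : E2 →L[ℝ] E2 :=
  LinearMap.toContinuousLinearMap
    { toFun := perp
      map_add' := perp_add
      map_smul' := perp_smul }

lemma perpL_apply (a : E2) : perpL a = perp a := rfl

lemma inner_E2 (a b : E2) : ⟪a, b⟫ = a 0 * b 0 + a 1 * b 1 := by
  simp [PiLp.inner_apply, Fin.sum_univ_two]; ring

lemma inner_perp_swap (a b : E2) : ⟪a, perp b⟫ = -⟪perp a, b⟫ := by
  simp [inner_E2, perp_apply0, perp_apply1]

lemma norm_perp (a : E2) : ‖perp a‖ = ‖a‖ := by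
  have : ⟪perp a, perp a⟫ = ⟪a, a⟫ := by rw [inner_E2, inner_E2, perp_apply0, perp_apply1]; ring
  have h := congrArg Real.sqrt this
  rwa [real_inner_self_eq_norm_mul_norm, real_inner_self_eq_norm_mul_norm,
    Real.sqrt_mul_self (norm_nonneg _), Real.sqrt_mul_self (norm_nonneg _)] at h

lemma perp_ne_zero {a : E2} (h : a ≠ 0) : perp a ≠ 0 := by
  intro h0
  apply h
  have := congrArg (fun v : E2 => ‖v‖) h0
  simpa [norm_perp] using norm_eq_zero.1 (by simpa [norm_perp] using this)

lemma span_decomp (w v : E2) : (‖w‖ ^ 2) • v = ⟪v, w⟫ • w + ⟪v, perp w⟫ • perp w := by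
  have hn : ‖w‖ ^ 2 = w 0 ^ 2 + w 1 ^ 2 := by
    rw [← real_inner_self_eq_norm_sq, inner_E2]; ring
  ext i; fin_cases i <;>
    simp [PiLp.add_apply, PiLp.smul_apply, inner_E2, perp_apply0, perp_apply1, hn, smul_eq_mul] <;>
    ring


section Grad
variable {φ : E2 → ℝ}

lemma contDiffAt_phi (hs : ContDiffOn ℝ 2 φ {(0:E2)}ᶜ) {z : E2} (hz : z ≠ 0) :
    ContDiffAt ℝ 2 φ z :=
  hs.contDiffAt (isOpen_compl_singleton.mem_nhds hz)

lemma diffAt_phi (hs : ContDiffOn ℝ 2 φ {(0:E2)}ᶜ) {z : E2} (hz : z ≠ 0) :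
    DifferentiableAt ℝ φ z :=
  (contDiffAt_phi hs hz).differentiableAt two_ne_zero

lemma fderiv_hom (hom : ∀ (c : ℝ) (x : E2), φ (c • x) = |c| * φ x)
    (hs : ContDiffOn ℝ 2 φ {(0:E2)}ᶜ) {z : E2} (hz : z ≠ 0) {c : ℝ} (hc : 0 < c) :
    fderiv ℝ φ (c • z) = fderiv ℝ φ z := by
  have hcz : c • z ≠ 0 := smul_ne_zero hc.ne' hz
  have h1 : (fun x : E2 => φ (c • x)) = fun x => c * φ x := by
    funext x; rw [hom, abs_of_pos hc]
  have hA : HasFDerivAt (fun x : E2 => c • x) (c • ContinuousLinearMap.id ℝ E2) z := by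
    exact (hasFDerivAt_id z).const_smul c
  have h2 : HasFDerivAt (fun x : E2 => φ (c • x))
      ((fderiv ℝ φ (c • z)).comp (c • ContinuousLinearMap.id ℝ E2)) z :=
    ((diffAt_phi hs hcz).hasFDerivAt).comp z hA
  have h3 : HasFDerivAt (fun x : E2 => c * φ x) (c • fderiv ℝ φ z) z :=
    ((diffAt_phi hs hz).hasFDerivAt).const_mul c
  rw [h1] at h2
  have h4 : (fderiv ℝ φ (c • z)).comp (c • ContinuousLinearMap.id ℝ E2)
      = c • fderiv ℝ φ z := h2.unique h3
  have h5 : c • fderiv ℝ φ (c • z) = c • fderiv ℝ φ z := by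
    rw [← h4]; ext v; simp [mul_comm]
  exact smul_right_injective (E2 →L[ℝ] ℝ) hc.ne' h5

lemma gradient_hom (hom : ∀ (c : ℝ) (x : E2), φ (c • x) = |c| * φ x)
    (hs : ContDiffOn ℝ 2 φ {(0:E2)}ᶜ) {z : E2} (hz : z ≠ 0) {c : ℝ} (hc : 0 < c) :
    gradient φ (c • z) = gradient φ z := by
  unfold gradient
  rw [fderiv_hom hom hs hz hc]

lemma contDiffAt_fderiv_phi (hs : ContDiffOn ℝ 2 φ {(0:E2)}ᶜ) {z : E2} (hz : z ≠ 0) :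
    ContDiffAt ℝ 1 (fderiv ℝ φ) z :=
  (contDiffAt_phi hs hz).fderiv_right (le_refl _)

lemma contDiffAt_grad (hs : ContDiffOn ℝ 2 φ {(0:E2)}ᶜ) {z : E2} (hz : z ≠ 0) :
    ContDiffAt ℝ 1 (gradient φ) z := by
  have : gradient φ = (⇑(InnerProductSpace.toDual ℝ E2).symm) ∘ (fderiv ℝ φ) := rfl
  rw [this]
  exact ((InnerProductSpace.toDual ℝ E2).symm.contDiff.contDiffAt).comp z
    (contDiffAt_fderiv_phi hs hz)

lemma diffAt_grad (hs : ContDiffOn ℝ 2 φ {(0:E2)}ᶜ) {z : E2} (hz : z ≠ 0) :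
    DifferentiableAt ℝ (gradient φ) z :=
  (contDiffAt_grad hs hz).differentiableAt one_ne_zero

/-- Euler relation: `D(∇φ)(z) z = 0` by 0-homogeneity of the gradient. -/
lemma fderiv_grad_self (hom : ∀ (c : ℝ) (x : E2), φ (c • x) = |c| * φ x)
    (hs : ContDiffOn ℝ 2 φ {(0:E2)}ᶜ) {z : E2} (hz : z ≠ 0) :
    fderiv ℝ (gradient φ) z z = 0 := by
  have h1 : HasDerivAt (fun t : ℝ => (1 + t) • z) z 0 := by
    simpa using ((hasDerivAt_id (0:ℝ)).const_add 1).smul_const z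
  have h2 : HasDerivAt (fun t : ℝ => gradient φ ((1 + t) • z))
      (fderiv ℝ (gradient φ) z z) 0 := by
    have hd := (diffAt_grad hs hz).hasFDerivAt
    have hd' : HasFDerivAt (gradient φ) (fderiv ℝ (gradient φ) z) ((1 + (0:ℝ)) • z) := by
      rw [show ((1:ℝ) + 0) • z = z from by norm_num]; exact hd
    exact hd'.comp_hasDerivAt 0 h1
  have h3 : (fun t : ℝ => gradient φ ((1 + t) • z)) =ᶠ[nhds (0:ℝ)]
      (fun _ => gradient φ z) := by
    filter_upwards [Metric.ball_mem_nhds (0:ℝ) one_pos] with t ht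
    have htpos : (0:ℝ) < 1 + t := by
      have : |t| < 1 := by simpa [Real.dist_eq] using ht
      linarith [abs_lt.1 this |>.1]
    exact gradient_hom hom hs hz htpos
  have h4 : HasDerivAt (fun t : ℝ => gradient φ ((1 + t) • z)) 0 0 :=
    (hasDerivAt_const (0:ℝ) (gradient φ z)).congr_of_eventuallyEq h3
  exact h2.unique h4

lemma inner_fderiv_grad_symm (hs : ContDiffOn ℝ 2 φ {(0:E2)}ᶜ) {z : E2} (hz : z ≠ 0)
    (u v : E2) :
    ⟪fderiv ℝ (gradient φ) z u, v⟫ = ⟪fderiv ℝ (gradient φ) z v, u⟫ := by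
  set f' := fderiv ℝ φ with hf'
  have hx : HasFDerivAt f' (fderiv ℝ f' z) z :=
    ((contDiffAt_fderiv_phi hs hz).differentiableAt one_ne_zero).hasFDerivAt
  have hev : ∀ᶠ y in nhds z, HasFDerivAt φ (f' y) y := by
    filter_upwards [isOpen_compl_singleton.mem_nhds hz] with y hy
    exact (diffAt_phi hs hy).hasFDerivAt
  have hsymm := second_derivative_symmetric_of_eventually_of_real hev hx
  have hcomp : ∀ w : E2, fderiv ℝ (gradient φ) z w
      = (InnerProductSpace.toDual ℝ E2).symm (fderiv ℝ f' z w) := by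
    intro w
    have : gradient φ = (⇑(InnerProductSpace.toDual ℝ E2).symm) ∘ f' := rfl
    rw [this, (InnerProductSpace.toDual ℝ E2).symm.comp_fderiv]
    rfl
  rw [hcomp u, hcomp v]
  rw [InnerProductSpace.toDual_symm_apply, InnerProductSpace.toDual_symm_apply]
  exact hsymm u v

end Grad

/-- Cahn-Hoffman vector field `N(x) = ∇φ°(σ'(x)^⊥)` of a parametrized curve. -/
def CH (φ : E2 → ℝ) (σ : ℝ → E2) (x : ℝ) : E2 :=
  gradient φ (perp (derivWithin σ (Set.Icc 0 1) x))

/-- unit normal `ν(x) = σ'(x)^⊥ / |σ'(x)|` -/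
def nor (σ : ℝ → E2) (x : ℝ) : E2 :=
  ‖derivWithin σ (Set.Icc 0 1) x‖⁻¹ • perp (derivWithin σ (Set.Icc 0 1) x)

/-- anisotropic curvature `κ^φ(x) = N'(x)·σ'(x)/|σ'(x)|²` -/
def curv (φ : E2 → ℝ) (σ : ℝ → E2) (x : ℝ) : ℝ :=
  ⟪derivWithin (CH φ σ) (Set.Icc 0 1) x, derivWithin σ (Set.Icc 0 1) x⟫ /
    ‖derivWithin σ (Set.Icc 0 1) x‖ ^ 2


section Curve

variable {φ : E2 → ℝ} {σ : ℝ → E2}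

lemma sigma1_contDiffOn (hσ : ContDiffOn ℝ 2 σ (Set.Icc 0 1)) :
    ContDiffOn ℝ 1 (derivWithin σ (Set.Icc 0 1)) (Set.Icc 0 1) :=
  hσ.derivWithin (uniqueDiffOn_Icc zero_lt_one) (by norm_num)

lemma sigma1_hasDerivWithinAt (hσ : ContDiffOn ℝ 2 σ (Set.Icc 0 1)) {x : ℝ}
    (hx : x ∈ Set.Icc (0:ℝ) 1) :
    HasDerivWithinAt (derivWithin σ (Set.Icc 0 1))
      (derivWithin (derivWithin σ (Set.Icc 0 1)) (Set.Icc 0 1) x) (Set.Icc 0 1) x :=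
  (((sigma1_contDiffOn hσ).differentiableOn one_ne_zero) x hx).hasDerivWithinAt

lemma CH_contDiffOn (hφ_smooth : ContDiffOn ℝ 2 φ {(0 : E2)}ᶜ)
    (hσ : ContDiffOn ℝ 2 σ (Set.Icc 0 1))
    (hreg : ∀ x ∈ Set.Icc (0:ℝ) 1, derivWithin σ (Set.Icc 0 1) x ≠ 0) :
    ContDiffOn ℝ 1 (CH φ σ) (Set.Icc 0 1) := by
  have hG : ContDiffOn ℝ 1 (gradient φ) {(0 : E2)}ᶜ :=
    fun z hz => (contDiffAt_grad hφ_smooth hz).contDiffWithinAt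
  have hp : ContDiffOn ℝ 1 (fun x => perp (derivWithin σ (Set.Icc 0 1) x)) (Set.Icc 0 1) :=
    perpL.contDiff.comp_contDiffOn (sigma1_contDiffOn hσ)
  exact hG.comp hp (fun x hx => perp_ne_zero (hreg x hx))

lemma CH_hasDerivWithinAt (hφ_smooth : ContDiffOn ℝ 2 φ {(0 : E2)}ᶜ)
    (hσ : ContDiffOn ℝ 2 σ (Set.Icc 0 1))
    (hreg : ∀ x ∈ Set.Icc (0:ℝ) 1, derivWithin σ (Set.Icc 0 1) x ≠ 0)
    {x : ℝ} (hx : x ∈ Set.Icc (0:ℝ) 1) :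
    HasDerivWithinAt (CH φ σ)
      (fderiv ℝ (gradient φ) (perp (derivWithin σ (Set.Icc 0 1) x))
        (perp (derivWithin (derivWithin σ (Set.Icc 0 1)) (Set.Icc 0 1) x)))
      (Set.Icc 0 1) x := by
  have h1 := sigma1_hasDerivWithinAt hσ hx
  have h2 : HasDerivWithinAt (fun y => perp (derivWithin σ (Set.Icc 0 1) y))
      (perp (derivWithin (derivWithin σ (Set.Icc 0 1)) (Set.Icc 0 1) x)) (Set.Icc 0 1) x :=
    perpL.hasFDerivAt.comp_hasDerivWithinAt x h1
  have h3 := (diffAt_grad hφ_smooth (perp_ne_zero (hreg x hx))).hasFDerivAt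
  exact h3.comp_hasDerivWithinAt x h2

lemma derivWithin_CH (hφ_smooth : ContDiffOn ℝ 2 φ {(0 : E2)}ᶜ)
    (hσ : ContDiffOn ℝ 2 σ (Set.Icc 0 1))
    (hreg : ∀ x ∈ Set.Icc (0:ℝ) 1, derivWithin σ (Set.Icc 0 1) x ≠ 0)
    {x : ℝ} (hx : x ∈ Set.Icc (0:ℝ) 1) :
    derivWithin (CH φ σ) (Set.Icc 0 1) x
      = fderiv ℝ (gradient φ) (perp (derivWithin σ (Set.Icc 0 1) x))
        (perp (derivWithin (derivWithin σ (Set.Icc 0 1)) (Set.Icc 0 1) x)) :=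
  (CH_hasDerivWithinAt hφ_smooth hσ hreg hx).derivWithin (uniqueDiffOn_Icc zero_lt_one x hx)

lemma inner_derivWithin_CH_perp
    (hφ_hom : ∀ (c : ℝ) (x : E2), φ (c • x) = |c| * φ x)
    (hφ_smooth : ContDiffOn ℝ 2 φ {(0 : E2)}ᶜ)
    (hσ : ContDiffOn ℝ 2 σ (Set.Icc 0 1))
    (hreg : ∀ x ∈ Set.Icc (0:ℝ) 1, derivWithin σ (Set.Icc 0 1) x ≠ 0)
    {x : ℝ} (hx : x ∈ Set.Icc (0:ℝ) 1) :
    ⟪derivWithin (CH φ σ) (Set.Icc 0 1) x, perp (derivWithin σ (Set.Icc 0 1) x)⟫ = 0 := by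
  have hz : perp (derivWithin σ (Set.Icc 0 1) x) ≠ 0 := perp_ne_zero (hreg x hx)
  rw [derivWithin_CH hφ_smooth hσ hreg hx,
    inner_fderiv_grad_symm hφ_smooth hz,
    fderiv_grad_self hφ_hom hφ_smooth hz]
  simp

/-- The key pointwise identity for the first-variation integrand. -/
lemma integrand_identity
    (hφ_hom : ∀ (c : ℝ) (x : E2), φ (c • x) = |c| * φ x)
    (hφ_smooth : ContDiffOn ℝ 2 φ {(0 : E2)}ᶜ)
    (hσ : ContDiffOn ℝ 2 σ (Set.Icc 0 1))
    (hreg : ∀ x ∈ Set.Icc (0:ℝ) 1, derivWithin σ (Set.Icc 0 1) x ≠ 0)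
    (β : ℝ → E2) {x : ℝ} (hx : x ∈ Set.Icc (0:ℝ) 1) :
    ⟪β x, perp (derivWithin (CH φ σ) (Set.Icc 0 1) x)⟫
      = ⟪β x, nor σ x⟫ * curv φ σ x * ‖derivWithin σ (Set.Icc 0 1) x‖ := by
  set w := derivWithin σ (Set.Icc 0 1) x with hw
  set N' := derivWithin (CH φ σ) (Set.Icc 0 1) x with hN'
  have hw0 : w ≠ 0 := hreg x hx
  have hnw : ‖w‖ ≠ 0 := norm_ne_zero_iff.2 hw0
  have hdec : (‖w‖ ^ 2) • N' = ⟪N', w⟫ • w := by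
    rw [span_decomp w N', inner_derivWithin_CH_perp hφ_hom hφ_smooth hσ hreg hx]
    simp
  have hN'eq : N' = curv φ σ x • w := by
    have := congrArg (fun v : E2 => (‖w‖ ^ 2)⁻¹ • v) hdec
    simp only [smul_smul, inv_mul_cancel₀ (pow_ne_zero 2 hnw), one_smul] at this
    rw [this]
    congr 1
    rw [curv, ← hN', ← hw]
    field_simp [mul_comm]
  rw [hN'eq, perp_smul]
  rw [real_inner_smul_right]
  rw [nor, ← hw, real_inner_smul_right]
  field_simp

end Curve

/-- First variation of the anisotropic length of a single regular `C²` curve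
(Proposition 3.1 of the paper, parametrized form). -/
theorem first_variation_of_anisotropic_length
    (φ : E2 → ℝ)
    (hφ_triangle : ∀ x y : E2, φ (x + y) ≤ φ x + φ y)
    (hφ_hom : ∀ (c : ℝ) (x : E2), φ (c • x) = |c| * φ x)
    (hφ_pos : ∀ x : E2, φ x = 0 → x = 0)
    (hφ_smooth : ContDiffOn ℝ 2 φ {(0 : E2)}ᶜ)
    (σ β : ℝ → E2)
    (hσ : ContDiffOn ℝ 2 σ (Set.Icc 0 1))
    (hβ : ContDiffOn ℝ 2 β (Set.Icc 0 1))
    (hreg : ∀ x ∈ Set.Icc (0:ℝ) 1, derivWithin σ (Set.Icc 0 1) x ≠ 0) :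
    HasDerivAt
      (fun s : ℝ => ∫ x in (0:ℝ)..1,
        φ (perp (derivWithin σ (Set.Icc 0 1) x + s • derivWithin β (Set.Icc 0 1) x)))
      ((∫ x in (0:ℝ)..1,
          ⟪β x, nor σ x⟫ * curv φ σ x * ‖derivWithin σ (Set.Icc 0 1) x‖)
        + ⟪β 0, perp (CH φ σ 0)⟫ - ⟪β 1, perp (CH φ σ 1)⟫) 0 := by
  classical
  set I : Set ℝ := Set.Icc 0 1 with hI
  set σ' : ℝ → E2 := derivWithin σ I with hσ'def
  set β' : ℝ → E2 := derivWithin β I with hβ'def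
  have hI01 : (0:ℝ) ∈ I := by constructor <;> norm_num
  have hσ'cont : ContinuousOn σ' I := (sigma1_contDiffOn hσ).continuousOn
  have hβ'cont : ContinuousOn β' I := (sigma1_contDiffOn hβ).continuousOn
  -- a positive lower bound for ‖σ'‖ and an upper bound for ‖β'‖ on I
  obtain ⟨x₀, hx₀I, hx₀min⟩ :=
    isCompact_Icc.exists_isMinOn (Set.nonempty_Icc.2 zero_le_one) hσ'cont.norm
  set m : ℝ := ‖σ' x₀‖ with hmdef
  have hm_pos : 0 < m := norm_pos_iff.2 (hreg x₀ hx₀I)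
  have hm : ∀ x ∈ I, m ≤ ‖σ' x‖ := fun x hx => hx₀min hx
  obtain ⟨M, hM⟩ := isCompact_Icc.exists_bound_of_continuousOn hβ'cont
  have hM0 : 0 ≤ M := le_trans (norm_nonneg _) (hM 0 hI01)
  set ε : ℝ := m / (2 * (M + 1)) with hεdef
  have hε : 0 < ε := div_pos hm_pos (by nlinarith)
  -- nondegeneracy of the perturbed tangent
  have key : ∀ s : ℝ, |s| ≤ ε → ∀ x ∈ I, σ' x + s • β' x ≠ 0 := by
    intro s hs x hx h0
    have h1 : ‖σ' x‖ ≤ ‖σ' x + s • β' x‖ + ‖s • β' x‖ := by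
      have := norm_add_le (σ' x + s • β' x) (-(s • β' x))
      simpa using this
    have h2 : ‖s • β' x‖ ≤ ε * M := by
      rw [norm_smul]
      apply mul_le_mul hs (hM x hx) (norm_nonneg _) hε.le
    have h3 : ε * M < m := by
      rw [hεdef]
      rw [div_mul_eq_mul_div, div_lt_iff₀ (by nlinarith)]
      nlinarith
    rw [h0] at h1
    simp at h1
    have := hm x hx
    linarith
  -- continuity of the integrand and of its s-derivative
  have hGcont : ContinuousOn (gradient φ) {(0:E2)}ᶜ :=
    fun z hz => (contDiffAt_grad hφ_smooth hz).continuousAt.continuousWithinAt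
  have contF : ∀ s : ℝ, |s| ≤ ε →
      ContinuousOn (fun x => φ (perp (σ' x + s • β' x))) I := by
    intro s hs
    refine hφ_smooth.continuousOn.comp
      (perpL.continuous.comp_continuousOn (hσ'cont.add (hβ'cont.const_smul s))) ?_
    intro x hx
    exact perp_ne_zero (key s hs x hx)
  have contF' : ∀ s : ℝ, |s| ≤ ε →
      ContinuousOn (fun x => ⟪gradient φ (perp (σ' x + s • β' x)), perp (β' x)⟫) I := by
    intro s hs
    refine ContinuousOn.inner
      (hGcont.comp (perpL.continuous.comp_continuousOn (hσ'cont.add (hβ'cont.const_smul s)))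
        (fun x hx => perp_ne_zero (key s hs x hx)))
      (perpL.continuous.comp_continuousOn hβ'cont)
  -- a uniform bound for the s-derivative
  have hjoint : ContinuousOn (fun p : ℝ × ℝ => σ' p.2 + p.1 • β' p.2)
      (Set.Icc (-ε) ε ×ˢ I) := by
    refine ContinuousOn.add
      (hσ'cont.comp continuous_snd.continuousOn (fun p hp => hp.2)) ?_
    exact ContinuousOn.smul continuousOn_fst
      (hβ'cont.comp continuous_snd.continuousOn (fun p hp => hp.2))
  have hFK : ContinuousOn
      (fun p : ℝ × ℝ => ⟪gradient φ (perp (σ' p.2 + p.1 • β' p.2)), perp (β' p.2)⟫)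
      (Set.Icc (-ε) ε ×ˢ I) := by
    refine ContinuousOn.inner
      (hGcont.comp (perpL.continuous.comp_continuousOn hjoint) ?_)
      (perpL.continuous.comp_continuousOn
        (hβ'cont.comp continuous_snd.continuousOn (fun p hp => hp.2)))
    intro p hp
    exact perp_ne_zero (key p.1 (abs_le.2 ⟨hp.1.1, hp.1.2⟩) p.2 hp.2)
  obtain ⟨C, hC⟩ := (isCompact_Icc.prod isCompact_Icc).exists_bound_of_continuousOn hFK
  have hIoc : Set.uIoc (0:ℝ) 1 = Set.Ioc 0 1 := Set.uIoc_of_le zero_le_one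
  have hIccsub : Set.Ioc (0:ℝ) 1 ⊆ I := Set.Ioc_subset_Icc_self
  have hIcc : Set.uIcc (0:ℝ) 1 = I := Set.uIcc_of_le zero_le_one
  -- differentiation under the integral sign
  have main := intervalIntegral.hasDerivAt_integral_of_dominated_loc_of_deriv_le
    (F := fun s x => φ (perp (σ' x + s • β' x)))
    (F' := fun s x => ⟪gradient φ (perp (σ' x + s • β' x)), perp (β' x)⟫)
    (x₀ := (0:ℝ)) (a := (0:ℝ)) (b := (1:ℝ)) (μ := MeasureTheory.volume)
    (bound := fun _ => C) (Metric.ball_mem_nhds (0:ℝ) hε)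
    ?_ ?_ ?_ ?_ ?_ ?_
  rotate_left
  · -- measurability of F s
    filter_upwards [Metric.ball_mem_nhds (0:ℝ) hε] with s hs
    have hs' : |s| ≤ ε := by
      have : dist s 0 < ε := hs
      rw [Real.dist_eq, sub_zero] at this
      exact this.le
    rw [hIoc]
    exact ((contF s hs').mono hIccsub).aestronglyMeasurable measurableSet_Ioc
  · -- integrability of F 0
    apply ContinuousOn.intervalIntegrable
    rw [hIcc]
    exact contF 0 (by simpa using hε.le)
  · -- measurability of F' 0
    rw [hIoc]
    exact ((contF' 0 (by simpa using hε.le)).mono hIccsub).aestronglyMeasurable measurableSet_Ioc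
  · -- bound
    refine MeasureTheory.ae_of_all _ fun t ht s hs => ?_
    rw [hIoc] at ht
    have hs' : |s| ≤ ε := by
      have : dist s 0 < ε := hs
      rw [Real.dist_eq, sub_zero] at this
      exact this.le
    exact hC (s, t) ⟨⟨neg_le_of_abs_le hs', le_of_abs_le hs'⟩, hIccsub ht⟩
  · exact intervalIntegrable_const
  · -- differentiability in s
    refine MeasureTheory.ae_of_all _ fun t ht s hs => ?_
    rw [hIoc] at ht
    have ht' : t ∈ I := hIccsub ht
    have hs' : |s| ≤ ε := by
      have : dist s 0 < ε := hs
      rw [Real.dist_eq, sub_zero] at this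
      exact this.le
    have hweq : ∀ u : ℝ, perp (σ' t + u • β' t) = perp (σ' t) + u • perp (β' t) := by
      intro u; rw [perp_add, perp_smul]
    set z : E2 := perp (σ' t) + s • perp (β' t) with hzdef
    have hz0 : z ≠ 0 := by
      rw [hzdef, ← hweq s]
      exact perp_ne_zero (key s hs' t ht')
    have h1 : HasDerivAt (fun u : ℝ => perp (σ' t) + u • perp (β' t)) (perp (β' t)) s := by
      simpa using (((hasDerivAt_id s).smul_const (perp (β' t))).const_add (perp (σ' t)))
    have h2 : HasFDerivAt φ (fderiv ℝ φ z) z := (diffAt_phi hφ_smooth hz0).hasFDerivAt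
    have hcomp : HasDerivAt (fun u : ℝ => φ (perp (σ' t) + u • perp (β' t)))
        (fderiv ℝ φ z (perp (β' t))) s := h2.comp_hasDerivAt s h1
    have hval : ⟪gradient φ (perp (σ' t + s • β' t)), perp (β' t)⟫
        = fderiv ℝ φ z (perp (β' t)) := by
      rw [hweq s, ← hzdef]
      exact InnerProductSpace.toDual_symm_apply
    show HasDerivAt (fun u : ℝ => φ (perp (σ' t + u • β' t)))
      (⟪gradient φ (perp (σ' t + s • β' t)), perp (β' t)⟫) s
    rw [hval]
    simpa only [hweq] using hcomp
  -- now rewrite the value of the derivative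
  have hmain := main.2
  have hCHcont : ContinuousOn (CH φ σ) I := (CH_contDiffOn hφ_smooth hσ hreg).continuousOn
  have hN'cont : ContinuousOn (derivWithin (CH φ σ) I) I :=
    (CH_contDiffOn hφ_smooth hσ hreg).continuousOn_derivWithin
      (uniqueDiffOn_Icc zero_lt_one) (le_refl _)
  have hβcont : ContinuousOn β I := hβ.continuousOn
  set g : ℝ → ℝ := fun x => ⟪β x, perp (CH φ σ x)⟫ with hgdef
  set g' : ℝ → ℝ := fun x =>
    ⟪β x, perp (derivWithin (CH φ σ) I x)⟫ + ⟪β' x, perp (CH φ σ x)⟫ with hg'def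
  have hgcont : ContinuousOn g I :=
    ContinuousOn.inner hβcont (perpL.continuous.comp_continuousOn hCHcont)
  have hAcont : ContinuousOn (fun x => ⟪β x, perp (derivWithin (CH φ σ) I x)⟫) I :=
    ContinuousOn.inner hβcont (perpL.continuous.comp_continuousOn hN'cont)
  have hg'cont : ContinuousOn g' I :=
    hAcont.add (ContinuousOn.inner hβ'cont (perpL.continuous.comp_continuousOn hCHcont))
  have hg'int : IntervalIntegrable g' MeasureTheory.volume 0 1 := by
    apply ContinuousOn.intervalIntegrable; rw [hIcc]; exact hg'cont
  have hAint : IntervalIntegrable (fun x => ⟪β x, perp (derivWithin (CH φ σ) I x)⟫)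
      MeasureTheory.volume 0 1 := by
    apply ContinuousOn.intervalIntegrable; rw [hIcc]; exact hAcont
  -- integration by parts
  have hIBP : ∫ x in (0:ℝ)..1, g' x = g 1 - g 0 := by
    apply intervalIntegral.integral_eq_sub_of_hasDeriv_right_of_le zero_le_one hgcont _ hg'int
    intro x hx
    have hxI : x ∈ I := Set.mem_Icc_of_Ioo hx
    have hnx : I ∈ nhds x := Icc_mem_nhds hx.1 hx.2
    have hβd : HasDerivAt β (β' x) x :=
      (((hβ.differentiableOn two_ne_zero) x hxI).hasDerivWithinAt).hasDerivAt hnx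
    have hCHd : HasDerivAt (CH φ σ) (derivWithin (CH φ σ) I x) x :=
      ((((CH_contDiffOn hφ_smooth hσ hreg).differentiableOn one_ne_zero) x
        hxI).hasDerivWithinAt).hasDerivAt hnx
    have hperp : HasDerivAt (fun y => perp (CH φ σ y)) (perp (derivWithin (CH φ σ) I x)) x :=
      perpL.hasFDerivAt.comp_hasDerivAt x hCHd
    exact (HasDerivAt.inner ℝ hβd hperp).hasDerivWithinAt
  -- pointwise identification of F' 0
  have hpt : ∀ x ∈ I, ⟪gradient φ (perp (σ' x + (0:ℝ) • β' x)), perp (β' x)⟫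
      = ⟪β x, perp (derivWithin (CH φ σ) I x)⟫ - g' x := by
    intro x hx
    have h0 : σ' x + (0:ℝ) • β' x = σ' x := by simp
    have hCHx : gradient φ (perp (σ' x)) = CH φ σ x := rfl
    show ⟪gradient φ (perp (σ' x + (0:ℝ) • β' x)), perp (β' x)⟫
      = ⟪β x, perp (derivWithin (CH φ σ) I x)⟫
        - (⟪β x, perp (derivWithin (CH φ σ) I x)⟫ + ⟪β' x, perp (CH φ σ x)⟫)
    rw [h0, hCHx, inner_perp_swap (CH φ σ x) (β' x),
      real_inner_comm (β' x) (perp (CH φ σ x))]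
    ring
  have hval2 : (∫ x in (0:ℝ)..1, ⟪gradient φ (perp (σ' x + (0:ℝ) • β' x)), perp (β' x)⟫)
      = (∫ x in (0:ℝ)..1,
          ⟪β x, nor σ x⟫ * curv φ σ x * ‖derivWithin σ (Set.Icc 0 1) x‖)
        + ⟪β 0, perp (CH φ σ 0)⟫ - ⟪β 1, perp (CH φ σ 1)⟫ := by
    have e1 : (∫ x in (0:ℝ)..1, ⟪gradient φ (perp (σ' x + (0:ℝ) • β' x)), perp (β' x)⟫)
        = ∫ x in (0:ℝ)..1, (⟪β x, perp (derivWithin (CH φ σ) I x)⟫ - g' x) := by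
      apply intervalIntegral.integral_congr
      intro x hx
      exact hpt x (by rwa [hIcc] at hx)
    have e2 : (∫ x in (0:ℝ)..1, (⟪β x, perp (derivWithin (CH φ σ) I x)⟫ - g' x))
        = (∫ x in (0:ℝ)..1, ⟪β x, perp (derivWithin (CH φ σ) I x)⟫)
          - ∫ x in (0:ℝ)..1, g' x := intervalIntegral.integral_sub hAint hg'int
    have e3 : (∫ x in (0:ℝ)..1, ⟪β x, perp (derivWithin (CH φ σ) I x)⟫)
        = ∫ x in (0:ℝ)..1,
            ⟪β x, nor σ x⟫ * curv φ σ x * ‖derivWithin σ (Set.Icc 0 1) x‖ := by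
      apply intervalIntegral.integral_congr
      intro x hx
      exact integrand_identity hφ_hom hφ_smooth hσ hreg β (by rwa [hIcc] at hx)
    rw [e1, e2, e3, hIBP]
    ring
  rw [← hval2]
  exact hmain
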